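/- The maximum-cardinality greedy choice function (increasing wage order, total wage at most B) satisfies substitutability, irrelevance of rejected contracts, and the law of aggregate demand. -/

import Mathlib

open Finset in
/-- The maximum-cardinality greedy choice function: sort `A` in increasing order of
wage (the fixed linear order on contracts is consistent with increasing wage) and add
each contract if the running total wage including it stays at most `B`; equivalently,
take the longest prefix of the sorted list whose total wage is at most `B`. -/
noncomputable def chCard {ι : Type*} [LinearOrder ι] (w : ι → ℝ) (B : ℝ)
    (A : Finset ι) : Finset ι := by
  classical
  exact
    let L := A.sort (· ≤ ·)
    (L.take (Nat.findGreatest (fun k => ((L.take k).map w).sum ≤ B) L.length)).toFinset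

section Aux

variable {ι : Type*} [LinearOrder ι] {w : ι → ℝ} {B : ℝ}

private lemma chCard_def [DecidableEq ι] (w : ι → ℝ) (B : ℝ) (A : Finset ι) :
    chCard w B A = ((A.sort (· ≤ ·)).take (Nat.findGreatest
      (fun k => (((A.sort (· ≤ ·)).take k).map w).sum ≤ B)
      (A.sort (· ≤ ·)).length)).toFinset := by
  unfold chCard
  congr!

private lemma sum_take_mono (hw : ∀ x, 0 < w x) (L : List ι) {k m : ℕ} (hkm : k ≤ m) :
    ((L.take k).map w).sum ≤ ((L.take m).map w).sum := by
  have h : L.take m = L.take k ++ (L.drop k).take (m - k) := by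
    rw [← List.take_add]; congr 1; omega
  rw [h, List.map_append, List.sum_append]
  have h0 : 0 ≤ (((L.drop k).take (m - k)).map w).sum := by
    apply List.sum_nonneg
    intro a ha
    simp only [List.mem_map] at ha
    obtain ⟨y, -, rfl⟩ := ha
    exact (hw y).le

  linarith

/-- The first `j+1` elements of the sorted list of `A` are exactly the elements of `A`
that are `≤` the `j`-th element. -/
private lemma take_toFinset_filter [DecidableEq ι] (A : Finset ι) {j : ℕ}
    (hj : j < (A.sort (· ≤ ·)).length) :
    ((A.sort (· ≤ ·)).take (j + 1)).toFinset
      = A.filter (· ≤ (A.sort (· ≤ ·))[j]) := by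
  set L := A.sort (· ≤ ·) with hL
  have hsort : L.Pairwise (· < ·) := (Finset.sortedLT_sort A).pairwise
  ext y
  simp only [List.mem_toFinset, List.mem_take_iff_getElem, Finset.mem_filter]
  constructor
  · rintro ⟨i, hi, rfl⟩
    have hiN : i < L.length := lt_of_lt_of_le hi (min_le_right _ _)
    refine ⟨(Finset.mem_sort (· ≤ ·)).1 (L.getElem_mem hiN), ?_⟩
    rcases eq_or_lt_of_le (show i ≤ j by omega) with h | h
    · subst h; exact le_refl _
    · exact le_of_lt (hsort.rel_get_of_lt (a := ⟨i, hiN⟩) (b := ⟨j, hj⟩) h)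
  · rintro ⟨hyA, hyle⟩
    have hyL : y ∈ L := (Finset.mem_sort (· ≤ ·)).2 hyA
    have hiN : L.idxOf y < L.length := List.idxOf_lt_length_iff.2 hyL
    have hget : L[L.idxOf y] = y := by
      simpa using List.idxOf_get hiN
    have hij : L.idxOf y ≤ j := by
      by_contra h
      push_neg at h
      have := hsort.rel_get_of_lt (a := ⟨j, hj⟩) (b := ⟨L.idxOf y, hiN⟩) h
      simp only [List.get_eq_getElem, hget] at this
      exact absurd hyle (not_le.2 this)
    exact ⟨L.idxOf y, by omega, hget⟩

/-- Membership characterization of the greedy choice. -/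
private lemma mem_chCard [DecidableEq ι] (hB : 0 < B) (hw : ∀ x, 0 < w x)
    {A : Finset ι} {x : ι} :
    x ∈ chCard w B A ↔ x ∈ A ∧ ∑ y ∈ A.filter (· ≤ x), w y ≤ B := by
  classical
  rw [chCard_def]
  set L := A.sort (· ≤ ·) with hL
  set P : ℕ → Prop := fun k => ((L.take k).map w).sum ≤ B with hP
  set K := Nat.findGreatest P L.length with hK
  have hP0 : P 0 := by simp [hP]; linarith
  have hPK : P K := Nat.findGreatest_spec (Nat.zero_le _) hP0
  have hsum : ∀ {j : ℕ} (hj : j < L.length),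
      ((L.take (j + 1)).map w).sum = ∑ y ∈ A.filter (· ≤ L[j]), w y := by
    intro j hj
    rw [← take_toFinset_filter A hj]
    rw [List.sum_toFinset _ ((L.take_sublist _).nodup (Finset.sort_nodup _ _))]
  constructor
  · intro hx
    rw [List.mem_toFinset, List.mem_take_iff_getElem] at hx
    obtain ⟨j, hj, rfl⟩ := hx
    have hjN : j < L.length := lt_of_lt_of_le hj (min_le_right _ _)
    refine ⟨(Finset.mem_sort (· ≤ ·)).1 (L.getElem_mem hjN), ?_⟩
    rw [← hsum hjN]
    calc ((L.take (j + 1)).map w).sum ≤ ((L.take K).map w).sum :=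
          sum_take_mono hw L (by omega)
      _ ≤ B := hPK
  · rintro ⟨hxA, hxsum⟩
    have hxL : x ∈ L := (Finset.mem_sort (· ≤ ·)).2 hxA
    have hiN : L.idxOf x < L.length := List.idxOf_lt_length_iff.2 hxL
    have hget : L[L.idxOf x] = x := by simpa using List.idxOf_get hiN
    have hPj : P (L.idxOf x + 1) := by
      show ((L.take (L.idxOf x + 1)).map w).sum ≤ B
      rw [hsum hiN, hget]; exact hxsum
    have hjK : L.idxOf x + 1 ≤ K := Nat.le_findGreatest (by omega) hPj
    rw [List.mem_toFinset, List.mem_take_iff_getElem]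
    exact ⟨L.idxOf x, by omega, hget⟩

private lemma card_chCard (hB : 0 < B) (hw : ∀ x, 0 < w x) (A : Finset ι) :
    (chCard w B A).card = Nat.findGreatest
      (fun k => (((A.sort (· ≤ ·)).take k).map w).sum ≤ B) (A.sort (· ≤ ·)).length := by
  classical
  rw [chCard_def]
  rw [List.toFinset_card_of_nodup ((List.take_sublist _ _).nodup (Finset.sort_nodup _ _))]
  rw [List.length_take]
  exact min_eq_left (Nat.findGreatest_le _)

/-- For `s ⊆ t`, the `i`-th smallest element of `t` is at most the `i`-th smallest
element of `s`. -/
private lemma sort_getElem_anti {s t : Finset ι} (hst : s ⊆ t) {i : ℕ} (hi : i < s.card) :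
    (t.sort (· ≤ ·))[i]'(by
        rw [Finset.length_sort]; exact lt_of_lt_of_le hi (Finset.card_le_card hst))
      ≤ (s.sort (· ≤ ·))[i]'(by rw [Finset.length_sort]; exact hi) := by
  classical
  have his : i < (s.sort (· ≤ ·)).length := by rw [Finset.length_sort]; exact hi
  have hit : i < (t.sort (· ≤ ·)).length := by
    rw [Finset.length_sort]; exact lt_of_lt_of_le hi (Finset.card_le_card hst)
  set a := (s.sort (· ≤ ·))[i] with ha
  set b := (t.sort (· ≤ ·))[i] with hb
  have hcards : (s.filter (· ≤ a)).card = i + 1 := by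
    rw [← take_toFinset_filter s his,
      List.toFinset_card_of_nodup ((List.take_sublist _ _).nodup (Finset.sort_nodup _ _)),
      List.length_take]
    omega
  have hcardt : (t.filter (· ≤ b)).card = i + 1 := by
    rw [← take_toFinset_filter t hit,
      List.toFinset_card_of_nodup ((List.take_sublist _ _).nodup (Finset.sort_nodup _ _)),
      List.length_take]
    omega
  by_contra hab
  push_neg at hab
  have hsub1 : s.filter (· ≤ a) ⊆ t.filter (· ≤ a) := by
    intro y hy
    rw [Finset.mem_filter] at hy ⊢
    exact ⟨hst hy.1, hy.2⟩
  have hbt : b ∈ t := (Finset.mem_sort (· ≤ ·)).1 ((t.sort (· ≤ ·)).getElem_mem hit)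
  have hsub2 : t.filter (· ≤ a) ⊆ (t.filter (· ≤ b)).erase b := by
    intro y hy
    rw [Finset.mem_filter] at hy
    rw [Finset.mem_erase, Finset.mem_filter]
    exact ⟨fun h => absurd (h ▸ hy.2) (not_le.2 hab), hy.1, le_of_lt (lt_of_le_of_lt hy.2 hab)⟩
  have h1 : i + 1 ≤ (t.filter (· ≤ a)).card :=
    hcards ▸ Finset.card_le_card hsub1
  have h2 : (t.filter (· ≤ a)).card ≤ ((t.filter (· ≤ b)).erase b).card :=
    Finset.card_le_card hsub2
  rw [Finset.card_erase_of_mem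
    (show b ∈ t.filter (· ≤ b) from Finset.mem_filter.2 ⟨hbt, le_refl _⟩), hcardt] at h2
  omega

/-- LAD for the greedy rule. -/
private lemma card_chCard_mono (hB : 0 < B) (hw : ∀ x, 0 < w x) (hmono : Monotone w)
    {s t : Finset ι} (hst : s ⊆ t) :
    (chCard w B s).card ≤ (chCard w B t).card := by
  classical
  rw [card_chCard hB hw, card_chCard hB hw]
  set P : ℕ → Prop := fun k => (((s.sort (· ≤ ·)).take k).map w).sum ≤ B with hP
  set K := Nat.findGreatest P (s.sort (· ≤ ·)).length with hK
  have hKs : K ≤ s.card := by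
    rw [← Finset.length_sort (α := ι) (· ≤ ·)]; exact Nat.findGreatest_le _
  have hKt : K ≤ (t.sort (· ≤ ·)).length := by
    rw [Finset.length_sort]; exact le_trans hKs (Finset.card_le_card hst)
  have hP0 : P 0 := by simp [hP]; linarith
  have hPK : (((s.sort (· ≤ ·)).take K).map w).sum ≤ B :=
    Nat.findGreatest_spec (Nat.zero_le _) hP0
  apply Nat.le_findGreatest hKt
  have hforall : List.Forall₂ (· ≤ ·) (((t.sort (· ≤ ·)).take K).map w)
      (((s.sort (· ≤ ·)).take K).map w) := by
    rw [List.forall₂_iff_get]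
    constructor
    · have hct : s.card ≤ t.card := Finset.card_le_card hst
      simp only [List.length_map, List.length_take, Finset.length_sort]
      omega
    · intro i h1 h2
      simp only [List.length_map, List.length_take] at h1 h2
      simp only [List.get_eq_getElem, List.getElem_map, List.getElem_take]
      exact hmono (sort_getElem_anti hst (by omega))
  exact le_trans hforall.sum_le_sum hPK

end Aux

/-- The maximum-cardinality greedy choice function satisfies
substitutability, irrelevance of rejected contracts, and the law of aggregate
demand. -/
theorem chCard_SUB_IRC_LAD {ι : Type*} [LinearOrder ι]
    (w : ι → ℝ) (B : ℝ) (hB : 0 < B) (hw : ∀ x, 0 < w x)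
    (hmono : Monotone w) :
    (∀ X'' X' : Finset ι, X'' ⊆ X' →
        X'' \ chCard w B X'' ⊆ X' \ chCard w B X') ∧
    (∀ X' X'' : Finset ι, Disjoint X' X'' →
        chCard w B (X' ∪ X'') ⊆ X' → chCard w B (X' ∪ X'') = chCard w B X') ∧
    (∀ X'' X' : Finset ι, X'' ⊆ X' →
        (chCard w B X'').card ≤ (chCard w B X').card) := by
  classical
  have hfilter_sum : ∀ (s t : Finset ι) (x : ι), s ⊆ t →
      ∑ y ∈ s.filter (· ≤ x), w y ≤ ∑ y ∈ t.filter (· ≤ x), w y := by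
    intro s t x hst
    apply Finset.sum_le_sum_of_subset_of_nonneg
    · intro y hy
      rw [Finset.mem_filter] at hy ⊢
      exact ⟨hst hy.1, hy.2⟩
    · intro y _ _
      exact (hw y).le
  refine ⟨?_, ?_, ?_⟩
  · -- SUB
    intro X'' X' hsub x hx
    rw [Finset.mem_sdiff] at hx ⊢
    obtain ⟨hx1, hx2⟩ := hx
    refine ⟨hsub hx1, fun hmem => hx2 ?_⟩
    rw [mem_chCard hB hw] at hmem ⊢
    exact ⟨hx1, le_trans (hfilter_sum X'' X' x hsub) hmem.2⟩
  · -- IRC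
    intro X' X'' _ hsubset
    have hXY : X' ⊆ X' ∪ X'' := Finset.subset_union_left
    have hle : chCard w B (X' ∪ X'') ⊆ chCard w B X' := by
      intro x hx
      have hx' := hx
      rw [mem_chCard hB hw] at hx' ⊢
      exact ⟨hsubset hx, le_trans (hfilter_sum X' (X' ∪ X'') x hXY) hx'.2⟩
    exact Finset.eq_of_subset_of_card_le hle (card_chCard_mono hB hw hmono hXY)
  · -- LAD
    intro X'' X' hsub
    exact card_chCard_mono hB hw hmono hsub
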